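/- Let 0 ≤ ε ≤ 1/6. For all real numbers w, z, x, y with w ≥ z ≥ x ≥ y ≥ 0, w + z + x + y = 1, and w + z = 1/2 + ε, the Shannon entropy satisfies H(w,z,x,y) ≥ H₁(ε), where H₁(ε) = −3(1/4 + ε/2)·log₂(1/4 + ε/2) − (1/4 − 3ε/2)·log₂(1/4 − 3ε/2). Moreover the bound is attained by the distribution (w,z,x,y) = (1/4 + ε/2, 1/4 + ε/2, 1/4 + ε/2, 1/4 − 3ε/2), which satisfies all the constraints. Hence for approximation parameter ε ≤ 1/6, the entropy-optimal Pauli encryption scheme is {1/4+ε/2, 1/4+ε/2, 1/4+ε/2, 1/4−3ε/2}. -/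
import Mathlib


noncomputable section

/-- `−p·log₂ p`, one term of the Shannon entropy (equals `0` at `p = 0`). -/
def nmlb (p : ℝ) : ℝ := -(p * Real.logb 2 p)

/-- The Shannon entropy (in bits) of the probability vector `(w, z, x, y)`. -/
def Hent (w z x y : ℝ) : ℝ := nmlb w + nmlb z + nmlb x + nmlb y

/-- The entropy of the distribution `(1/4+ε/2, 1/4+ε/2, 1/4+ε/2, 1/4−3ε/2)`. -/
def H1 (ε : ℝ) : ℝ :=
  -(3 * ((1/4 + ε/2) * Real.logb 2 (1/4 + ε/2)))
    - (1/4 - 3*ε/2) * Real.logb 2 (1/4 - 3*ε/2)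

open Real Set

set_option maxHeartbeats 1000000

section helpers

lemma hdN {t : ℝ} (h : t ≠ 0) : HasDerivAt Real.negMulLog (-Real.log t - 1) t :=
  Real.hasDerivAt_negMulLog h

lemma hdN_affine (c d t : ℝ) (h : c + d * t ≠ 0) :
    HasDerivAt (fun u => Real.negMulLog (c + d * u)) ((-Real.log (c + d * t) - 1) * d) t := by
  have h1 : HasDerivAt (fun u : ℝ => c + d * u) d t := by
    simpa using ((hasDerivAt_id t).const_mul d).const_add c
  exact (Real.hasDerivAt_negMulLog h).comp t h1

lemma hdN_sub (s t : ℝ) (h : s - t ≠ 0) :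
    HasDerivAt (fun u => Real.negMulLog (s - u)) (Real.log (s - t) + 1) t := by
  have h' : s + (-1) * t ≠ 0 := by rw [show s + (-1) * t = s - t by ring]; exact h
  have h0 := hdN_affine s (-1) t h'
  have e1 : (fun u : ℝ => Real.negMulLog (s + -1 * u)) = fun u => Real.negMulLog (s - u) := by
    funext u; congr 1; ring
  have e2 : (-Real.log (s + -1 * t) - 1) * (-1) = Real.log (s - t) + 1 := by
    rw [show s + -1 * t = s - t by ring]; ring
  rw [e1, e2] at h0; exact h0

lemma hdN_add (c t : ℝ) (h : c + t ≠ 0) :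
    HasDerivAt (fun u => Real.negMulLog (c + u)) (-Real.log (c + t) - 1) t := by
  have h' : c + (1:ℝ) * t ≠ 0 := by rw [one_mul]; exact h
  have h0 := hdN_affine c 1 t h'
  have e1 : (fun u : ℝ => Real.negMulLog (c + 1 * u)) = fun u => Real.negMulLog (c + u) := by
    funext u; congr 1; ring
  have e2 : (-Real.log (c + 1 * t) - 1) * 1 = -Real.log (c + t) - 1 := by
    rw [one_mul, mul_one]
  rw [e1, e2] at h0; exact h0

lemma hdN_submul (c d t : ℝ) (h : c - d * t ≠ 0) :
    HasDerivAt (fun u => Real.negMulLog (c - d * u)) ((Real.log (c - d * t) + 1) * d) t := by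
  have h' : c + (-d) * t ≠ 0 := by rw [show c + (-d) * t = c - d * t by ring]; exact h
  have h0 := hdN_affine c (-d) t h'
  have e1 : (fun u : ℝ => Real.negMulLog (c + -d * u)) = fun u => Real.negMulLog (c - d * u) := by
    funext u; congr 1; ring
  have e2 : (-Real.log (c + -d * t) - 1) * (-d) = (Real.log (c - d * t) + 1) * d := by
    rw [show c + -d * t = c - d * t by ring]; ring
  rw [e1, e2] at h0; exact h0

lemma hdN_addmul (c d t : ℝ) (h : c + d * t ≠ 0) :
    HasDerivAt (fun u => Real.negMulLog (c + d * u)) ((-Real.log (c + d * t) - 1) * d) t :=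
  hdN_affine c d t h

end helpers

/-- Pair monotonicity: `t ↦ N t + N (s - t)` is monotone on `[0, s/2]`. -/
lemma pair_mono {s p q : ℝ} (hp : 0 ≤ p) (hpq : p ≤ q) (hq : q ≤ s / 2) :
    Real.negMulLog p + Real.negMulLog (s - p)
      ≤ Real.negMulLog q + Real.negMulLog (s - q) := by
  set f : ℝ → ℝ := fun t => Real.negMulLog t + Real.negMulLog (s - t) with hf
  have key : ∀ t ∈ Ioo (0 : ℝ) (s / 2),
      HasDerivAt f (Real.log (s - t) - Real.log t) t := by
    intro t ht
    have ht0 : t ≠ 0 := ne_of_gt ht.1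
    have hlt : t < s - t := by nlinarith [ht.1, ht.2]
    have hst : s - t ≠ 0 := by intro h0; rw [h0] at hlt; linarith [ht.1]
    have h := (hdN ht0).add (hdN_sub s t hst)
    have e : -Real.log t - 1 + (Real.log (s - t) + 1) = Real.log (s - t) - Real.log t := by ring
    rw [e] at h; exact h
  have hmono : MonotoneOn f (Icc 0 (s / 2)) := by
    apply monotoneOn_of_deriv_nonneg (convex_Icc 0 (s / 2))
    · apply Continuous.continuousOn
      exact Real.continuous_negMulLog.add
        (Real.continuous_negMulLog.comp (continuous_const.sub continuous_id))
    · rw [interior_Icc]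
      exact fun t ht => (key t ht).differentiableAt.differentiableWithinAt
    · rw [interior_Icc]
      intro t ht
      rw [(key t ht).deriv]
      have : Real.log t ≤ Real.log (s - t) := Real.log_le_log ht.1 (by nlinarith [ht.1, ht.2])
      linarith
  have hq0 : 0 ≤ q := le_trans hp hpq
  exact hmono ⟨hp, le_trans hpq hq⟩ ⟨hq0, hq⟩ hpq

/-- Endpoint comparison. -/
lemma endpoint_cmp {δ : ℝ} (h0 : 0 ≤ δ) (h1 : δ ≤ 1/12) :
    3 * Real.negMulLog (1/4 + δ) + Real.negMulLog (1/4 - 3*δ)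
      ≤ 3 * Real.negMulLog (1/4 - δ) + Real.negMulLog (1/4 + 3*δ) := by
  set G : ℝ → ℝ := fun u => 3 * Real.negMulLog (1/4 - u) + Real.negMulLog (1/4 + 3*u)
      - 3 * Real.negMulLog (1/4 + u) - Real.negMulLog (1/4 - 3*u) with hG
  have key : ∀ t ∈ Ioo (0 : ℝ) (1/12),
      HasDerivAt G (3 * (Real.log (1/4 - t) + Real.log (1/4 + t)
        - Real.log (1/4 + 3*t) - Real.log (1/4 - 3*t))) t := by
    intro t ht
    obtain ⟨ht0, ht1⟩ := ht
    have a1 : (1:ℝ)/4 - t ≠ 0 := by intro h; nlinarith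
    have a2 : (1:ℝ)/4 + 3*t ≠ 0 := by intro h; nlinarith
    have a3 : (1:ℝ)/4 + t ≠ 0 := by intro h; nlinarith
    have a4 : (1:ℝ)/4 - 3*t ≠ 0 := by intro h; nlinarith
    have h := ((((hdN_sub (1/4) t a1).const_mul 3).add (hdN_addmul (1/4) 3 t a2)).sub
        ((hdN_add (1/4) t a3).const_mul 3)).sub (hdN_submul (1/4) 3 t a4)
    have e : 3 * (Real.log (1/4 - t) + 1) + (-Real.log (1/4 + 3*t) - 1) * 3
        - 3 * (-Real.log (1/4 + t) - 1) - (Real.log (1/4 - 3*t) + 1) * 3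
        = 3 * (Real.log (1/4 - t) + Real.log (1/4 + t)
          - Real.log (1/4 + 3*t) - Real.log (1/4 - 3*t)) := by ring
    rw [e] at h; exact h
  have hmono : MonotoneOn G (Icc 0 (1/12 : ℝ)) := by
    apply monotoneOn_of_deriv_nonneg (convex_Icc 0 (1/12 : ℝ))
    · apply Continuous.continuousOn; fun_prop
    · rw [interior_Icc]
      exact fun t ht => (key t ht).differentiableAt.differentiableWithinAt
    · rw [interior_Icc]
      intro t ht
      obtain ⟨ht0, ht1⟩ := ht
      rw [(key t ⟨ht0, ht1⟩).deriv]
      have p1 : (0:ℝ) < 1/4 - t := by nlinarith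
      have p2 : (0:ℝ) < 1/4 + 3*t := by nlinarith
      have p3 : (0:ℝ) < 1/4 + t := by nlinarith
      have p4 : (0:ℝ) < 1/4 - 3*t := by nlinarith
      have e1 : Real.log (1/4 + 3*t) + Real.log (1/4 - 3*t)
          = Real.log ((1/4 + 3*t) * (1/4 - 3*t)) := (Real.log_mul p2.ne' p4.ne').symm
      have e2 : Real.log (1/4 - t) + Real.log (1/4 + t)
          = Real.log ((1/4 - t) * (1/4 + t)) := (Real.log_mul p1.ne' p3.ne').symm
      have hle : Real.log ((1/4 + 3*t) * (1/4 - 3*t)) ≤ Real.log ((1/4 - t) * (1/4 + t)) :=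
        Real.log_le_log (by nlinarith) (by nlinarith)
      nlinarith [hle]
  have h := hmono (left_mem_Icc.mpr (by norm_num)) ⟨h0, h1⟩ h0
  have hG0 : G 0 = 0 := by simp [hG]
  rw [hG0] at h
  simp only [hG] at h
  linarith

/-- phi lower bound. -/
lemma phi_ge {ε z : ℝ} (hε0 : 0 ≤ ε) (hε1 : ε ≤ 1/6)
    (hz1 : 1/4 - ε/2 ≤ z) (hz2 : z ≤ 1/4 + ε/2) :
    3 * Real.negMulLog (1/4 + ε/2) + Real.negMulLog (1/4 - 3*ε/2)
      ≤ Real.negMulLog (1/2 + ε - z) + 2 * Real.negMulLog z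
        + Real.negMulLog (1/2 - ε - z) := by
  set φ : ℝ → ℝ := fun u => Real.negMulLog (1/2 + ε - u) + 2 * Real.negMulLog u
      + Real.negMulLog (1/2 - ε - u) with hφ
  have key : ∀ t : ℝ, 0 < t → t < 1/2 - ε →
      HasDerivAt φ (Real.log (1/2 + ε - t) + Real.log (1/2 - ε - t) - 2 * Real.log t) t := by
    intro t ht0 ht1
    have a1 : (1:ℝ)/2 + ε - t ≠ 0 := by intro h; nlinarith
    have a2 : (1:ℝ)/2 - ε - t ≠ 0 := by intro h; nlinarith
    have h := (((hdN_sub (1/2 + ε) t a1).add ((hdN ht0.ne').const_mul 2)).add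
        (hdN_sub (1/2 - ε) t a2))
    have e : Real.log (1/2 + ε - t) + 1 + 2 * (-Real.log t - 1) + (Real.log (1/2 - ε - t) + 1)
        = Real.log (1/2 + ε - t) + Real.log (1/2 - ε - t) - 2 * Real.log t := by ring
    rw [e] at h; exact h
  have hcont : Continuous φ := by fun_prop
  have htarget : φ (1/4 + ε/2)
      = 3 * Real.negMulLog (1/4 + ε/2) + Real.negMulLog (1/4 - 3*ε/2) := by
    simp only [hφ]
    rw [show (1:ℝ)/2 + ε - (1/4 + ε/2) = 1/4 + ε/2 by ring,
        show (1:ℝ)/2 - ε - (1/4 + ε/2) = 1/4 - 3*ε/2 by ring]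
    ring
  rcases le_or_gt z (1/4 - ε^2) with hc | hc
  · -- increasing part: φ (1/4 - ε/2) ≤ φ z, then compare endpoints
    have hmono : MonotoneOn φ (Icc (1/4 - ε/2) (1/4 - ε^2)) := by
      apply monotoneOn_of_deriv_nonneg (convex_Icc _ _)
      · exact hcont.continuousOn
      · rw [interior_Icc]
        intro t ht
        have ht0 : 0 < t := by nlinarith [ht.1]
        have ht1 : t < 1/2 - ε := by nlinarith [ht.2]
        exact (key t ht0 ht1).differentiableAt.differentiableWithinAt
      · rw [interior_Icc]
        intro t ht
        have ht0 : 0 < t := by nlinarith [ht.1]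
        have ht1 : t < 1/2 - ε := by nlinarith [ht.2]
        rw [(key t ht0 ht1).deriv]
        have p1 : (0:ℝ) < 1/2 + ε - t := by nlinarith
        have p2 : (0:ℝ) < 1/2 - ε - t := by linarith
        have pt : (0:ℝ) < t := ht0
        have e1 : Real.log (1/2 + ε - t) + Real.log (1/2 - ε - t)
            = Real.log ((1/2 + ε - t) * (1/2 - ε - t)) := (Real.log_mul p1.ne' p2.ne').symm
        have e2 : 2 * Real.log t = Real.log (t * t) := by
          rw [Real.log_mul pt.ne' pt.ne']; ring
        have hle : Real.log (t * t) ≤ Real.log ((1/2 + ε - t) * (1/2 - ε - t)) :=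
          Real.log_le_log (by nlinarith) (by nlinarith [ht.2])
        linarith
    have hmem1 : (1/4 - ε/2 : ℝ) ∈ Icc (1/4 - ε/2) (1/4 - ε^2) :=
      ⟨le_refl _, by nlinarith⟩
    have hmem2 : z ∈ Icc (1/4 - ε/2) (1/4 - ε^2) := ⟨hz1, hc⟩
    have hlow := hmono hmem1 hmem2 hz1
    have hφlow : φ (1/4 - ε/2)
        = 3 * Real.negMulLog (1/4 - ε/2) + Real.negMulLog (1/4 + 3*ε/2) := by
      simp only [hφ]
      rw [show (1:ℝ)/2 + ε - (1/4 - ε/2) = 1/4 + 3*ε/2 by ring,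
          show (1:ℝ)/2 - ε - (1/4 - ε/2) = 1/4 - ε/2 by ring]
      ring
    have hcmp := endpoint_cmp (δ := ε/2) (by linarith) (by linarith)
    rw [show (1:ℝ)/4 - 3*(ε/2) = 1/4 - 3*ε/2 by ring,
        show (1:ℝ)/4 + 3*(ε/2) = 1/4 + 3*ε/2 by ring] at hcmp
    have hzeq : φ z = Real.negMulLog (1/2 + ε - z) + 2 * Real.negMulLog z
        + Real.negMulLog (1/2 - ε - z) := rfl
    linarith
  · -- decreasing part: φ z ≥ φ (1/4 + ε/2)
    have hanti : AntitoneOn φ (Icc (1/4 - ε^2) (1/4 + ε/2)) := by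
      apply antitoneOn_of_deriv_nonpos (convex_Icc _ _)
      · exact hcont.continuousOn
      · rw [interior_Icc]
        intro t ht
        have ht0 : 0 < t := by nlinarith [ht.1]
        have ht1 : t < 1/2 - ε := by nlinarith [ht.2]
        exact (key t ht0 ht1).differentiableAt.differentiableWithinAt
      · rw [interior_Icc]
        intro t ht
        have ht0 : 0 < t := by nlinarith [ht.1]
        have ht1 : t < 1/2 - ε := by nlinarith [ht.2]
        rw [(key t ht0 ht1).deriv]
        have p1 : (0:ℝ) < 1/2 + ε - t := by nlinarith
        have p2 : (0:ℝ) < 1/2 - ε - t := by linarith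
        have e1 : Real.log (1/2 + ε - t) + Real.log (1/2 - ε - t)
            = Real.log ((1/2 + ε - t) * (1/2 - ε - t)) := (Real.log_mul p1.ne' p2.ne').symm
        have e2 : 2 * Real.log t = Real.log (t * t) := by
          rw [Real.log_mul ht0.ne' ht0.ne']; ring
        have hle : Real.log ((1/2 + ε - t) * (1/2 - ε - t)) ≤ Real.log (t * t) :=
          Real.log_le_log (by nlinarith) (by nlinarith [ht.1])
        linarith
    have hmem1 : z ∈ Icc (1/4 - ε^2) (1/4 + ε/2) := ⟨hc.le, hz2⟩
    have hmem2 : (1/4 + ε/2 : ℝ) ∈ Icc (1/4 - ε^2) (1/4 + ε/2) :=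
      ⟨by nlinarith, le_refl _⟩
    have hhigh := hanti hmem1 hmem2 hz2
    have hzeq : φ z = Real.negMulLog (1/2 + ε - z) + 2 * Real.negMulLog z
        + Real.negMulLog (1/2 - ε - z) := rfl
    linarith


lemma nmlb_eq (p : ℝ) : nmlb p = Real.negMulLog p / Real.log 2 := by
  simp only [nmlb, Real.logb, Real.negMulLog]; ring


/-- For `0 ≤ ε ≤ 1/6`, every Pauli-scheme probability vector `(w, z, x, y)` with
decreasingly ordered weights and approximation parameter `ε = w + z − 1/2` has Shannon
entropy at least `H₁(ε)`, and the bound is attained by the admissible distribution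
`(1/4+ε/2, 1/4+ε/2, 1/4+ε/2, 1/4−3ε/2)`. -/
theorem optimal_entropy_small_eps (ε : ℝ) (hε0 : 0 ≤ ε) (hε1 : ε ≤ 1/6) :
    (∀ w z x y : ℝ, w ≥ z → z ≥ x → x ≥ y → y ≥ 0 → w + z + x + y = 1 →
      w + z = 1/2 + ε → H1 ε ≤ Hent w z x y)
    ∧ ((1/4 + ε/2 : ℝ) ≥ 1/4 + ε/2 ∧ (1/4 + ε/2 : ℝ) ≥ 1/4 + ε/2
        ∧ (1/4 + ε/2 : ℝ) ≥ 1/4 - 3*ε/2 ∧ (1/4 - 3*ε/2 : ℝ) ≥ 0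
        ∧ (1/4 + ε/2) + (1/4 + ε/2) + (1/4 + ε/2) + (1/4 - 3*ε/2) = (1 : ℝ)
        ∧ (1/4 + ε/2) + (1/4 + ε/2) = (1/2 : ℝ) + ε
        ∧ Hent (1/4 + ε/2) (1/4 + ε/2) (1/4 + ε/2) (1/4 - 3*ε/2) = H1 ε) := by
  have hlog2 : (0:ℝ) < Real.log 2 := Real.log_pos (by norm_num)
  have hH1 : H1 ε = (3 * Real.negMulLog (1/4 + ε/2) + Real.negMulLog (1/4 - 3*ε/2))
      / Real.log 2 := by
    simp only [H1, Real.logb, Real.negMulLog]; ring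
  constructor
  · intro w z x y hwz hzx hxy hy0 hsum hwz2
    have hxy2 : x + y = 1/2 - ε := by linarith
    have hz_lo : 1/4 - ε/2 ≤ z := by linarith
    have hz_hi : z ≤ 1/4 + ε/2 := by linarith
    -- Step A: replace (x, y) by (z, 1/2 - ε - z)
    have hA := pair_mono (s := 1/2 - ε) (p := 1/2 - ε - z) (q := y)
      (by linarith) (by linarith) (by linarith)
    rw [show (1:ℝ)/2 - ε - (1/2 - ε - z) = z by ring,
        show (1:ℝ)/2 - ε - y = x by linarith] at hA
    -- Step B: phi bound
    have hB := phi_ge (z := z) hε0 hε1 hz_lo hz_hi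
    have hw : w = 1/2 + ε - z := by linarith
    rw [hH1, show Hent w z x y = (Real.negMulLog w + Real.negMulLog z + Real.negMulLog x
        + Real.negMulLog y) / Real.log 2 by simp only [Hent, nmlb_eq]; ring]
    rw [div_le_div_iff₀ hlog2 hlog2, hw]
    nlinarith [hA, hB, hlog2]
  · refine ⟨le_refl _, le_refl _, by linarith, by linarith, by ring, by ring, ?_⟩
    rw [hH1, show Hent (1/4 + ε/2) (1/4 + ε/2) (1/4 + ε/2) (1/4 - 3*ε/2)
        = (3 * Real.negMulLog (1/4 + ε/2) + Real.negMulLog (1/4 - 3*ε/2)) / Real.log 2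
        by simp only [Hent, nmlb_eq]; ring]

end
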